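/- Let n ≥ 1 and let q : ℕ → ℍ with q n ≠ 0. Then the right-sided simple quaternionic polynomial has a zero in ℍ, i.e., there exists x ∈ ℍ such that ∑_{m=0}^{n} x^m·(q m) = 0. -/

import Mathlib

open Quaternion Finset

set_option maxHeartbeats 1000000

noncomputable def cq : ℂ →+* Quaternion ℝ where
  toFun z := ⟨z.re, z.im, 0, 0⟩
  map_one' := by ext <;> simp
  map_mul' z w := by
    show (⟨(z*w).re, (z*w).im, 0, 0⟩ : ℍ) = (⟨z.re, z.im, 0, 0⟩ : ℍ) * ⟨w.re, w.im, 0, 0⟩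
    ext <;> simp [Complex.mul_re, Complex.mul_im] <;> ring
  map_zero' := by ext <;> simp
  map_add' z w := by
    show (⟨(z+w).re, (z+w).im, 0, 0⟩ : ℍ) = (⟨z.re, z.im, 0, 0⟩ : ℍ) + ⟨w.re, w.im, 0, 0⟩
    ext <;> simp

lemma cq_ofReal (r : ℝ) : cq (r : ℂ) = (r : Quaternion ℝ) := by ext <;> simp [cq] <;> rfl

lemma div_lemma (t s : ℝ) : ∀ (N : ℕ) (a : ℕ → ℍ), (∀ k, N < k → a k = 0) →
    ∃ (b : ℕ → ℍ) (r₀ r₁ : ℍ), (∀ j, N < j + 2 → b j = 0) ∧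
      a 0 = r₀ + s • b 0 ∧
      a 1 = r₁ - t • b 0 + s • b 1 ∧
      ∀ k, a (k + 2) = b k - t • b (k + 1) + s • b (k + 2) := by
  intro N
  induction N using Nat.strong_induction_on with
  | _ N ih =>
    match N with
    | 0 =>
      intro a ha
      exact ⟨0, a 0, a 1, by simp, by simp, by simp, fun k => by simpa using ha (k+2) (by omega)⟩
    | 1 =>
      intro a ha
      exact ⟨0, a 0, a 1, by simp, by simp, by simp, fun k => by simpa using ha (k+2) (by omega)⟩
    | (M+2) =>
      intro a ha
      obtain ⟨b', r₀, r₁, hb', h0, h1, h2⟩ := ih (M+1) (by omega)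
        (fun k => a k - ((if k = M+2 then a (M+2) else 0) - t • (if k+1 = M+2 then a (M+2) else 0)
          + s • (if k+2 = M+2 then a (M+2) else 0)))
        (by
          intro k hk
          by_cases h : k = M + 2
          · subst h; simp
          · have h1 : ¬ (k+1 = M + 2) := by omega
            have h2 : ¬ (k+2 = M+2) := by omega
            simp only [if_neg h, if_neg h1, if_neg h2, smul_zero, sub_zero, add_zero, zero_sub,
              sub_neg_eq_add, sub_zero]
            simpa using ha k (by omega))
      rw [sub_eq_iff_eq_add] at h0 h1
      refine ⟨fun j => b' j + (if j + 2 = M + 2 then a (M+2) else 0), r₀, r₁, ?_, ?_, ?_, ?_⟩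
      · intro j hj
        have h' : ¬ (j + 2 = M + 2) := by omega
        show b' j + (if j + 2 = M + 2 then a (M+2) else 0) = 0
        rw [hb' j (by omega), if_neg h', add_zero]
      · rw [h0, if_neg (by omega : ¬ (0 = M + 2)), if_neg (by omega : ¬ (0 + 1 = M + 2))]
        show _ = r₀ + s • (b' 0 + if 0 + 2 = M + 2 then a (M+2) else 0)
        simp only [smul_zero, zero_sub, sub_zero, neg_zero, zero_add]
        module
      · rw [h1, if_neg (by omega : ¬ (1 = M + 2)),
          show (1 + 1 : ℕ) = 0 + 2 from rfl, show (1 + 2 : ℕ) = 1 + 2 from rfl]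
        show _ = r₁ - t • (b' 0 + if 0 + 2 = M + 2 then a (M+2) else 0)
          + s • (b' 1 + if 1 + 2 = M + 2 then a (M+2) else 0)
        simp only [smul_zero, zero_sub, sub_zero, neg_zero, zero_add]
        module
      · intro k
        have h2k := h2 k
        rw [sub_eq_iff_eq_add] at h2k
        rw [h2k, show (k + 2 + 1 : ℕ) = k + 1 + 2 from by omega]
        show _ = (b' k + if k + 2 = M + 2 then a (M+2) else 0)
          - t • (b' (k+1) + if k + 1 + 2 = M + 2 then a (M+2) else 0)
          + s • (b' (k+2) + if k + 2 + 2 = M + 2 then a (M+2) else 0)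
        module

lemma ev_aux (t s : ℝ) (x : ℍ) (a b : ℕ → ℍ) (r₀ r₁ : ℍ)
    (h0 : a 0 = r₀ + s • b 0) (h1 : a 1 = r₁ - t • b 0 + s • b 1)
    (h2 : ∀ k, a (k + 2) = b k - t • b (k + 1) + s • b (k + 2)) :
    ∀ M, ∑ k ∈ Finset.range (M + 2), x ^ k * a k
      = x * r₁ + r₀ + (∑ j ∈ Finset.range M, (x ^ j * (x * x - t • x + s • 1)) * b j)
        + (s • (x ^ M * b M) + s • (x ^ (M + 1) * b (M + 1)) - t • (x ^ (M + 1) * b M)) := by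
  intro M
  induction M with
  | zero =>
    rw [Finset.sum_range_succ, Finset.sum_range_one, h0, h1]
    simp only [Finset.range_zero, Finset.sum_empty, zero_add, pow_zero, pow_one, one_mul,
      add_zero]
    simp only [mul_add, mul_sub, mul_smul_comm]
    abel
  | succ M IH =>
    rw [show M + 1 + 2 = (M + 2) + 1 from rfl, Finset.sum_range_succ, IH,
      Finset.sum_range_succ, h2 M]
    simp only [mul_add, mul_sub, mul_smul_comm, smul_mul_assoc, sub_mul, add_mul, mul_one,
      pow_succ, mul_assoc]
    abel

lemma conj_pow₀ (u x : ℍ) (hu : u ≠ 0) (j : ℕ) :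
    (u⁻¹ * x * u) ^ j = u⁻¹ * x ^ j * u := by
  induction j with
  | zero => simp [inv_mul_cancel₀ hu]
  | succ j IH =>
    rw [pow_succ, IH, pow_succ]
    simp [mul_assoc, mul_inv_cancel_left₀ hu]

lemma prod_eval (n : ℕ) (A B : ℕ → ℍ) (x : ℍ) :
    ∑ k ∈ Finset.range (2 * n + 1), x ^ k *
        (∑ i ∈ Finset.range (n + 1), ∑ j ∈ Finset.range (n + 1),
          if i + j = k then A i * B j else 0)
      = ∑ j ∈ Finset.range (n + 1), x ^ j *
          ((∑ i ∈ Finset.range (n + 1), x ^ i * A i) * B j) := by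
  simp only [Finset.mul_sum, Finset.sum_mul, mul_ite, mul_zero]
  rw [Finset.sum_comm]
  conv_rhs => rw [Finset.sum_comm]
  refine Finset.sum_congr rfl fun i hi => ?_
  rw [Finset.sum_comm]
  refine Finset.sum_congr rfl fun j hj => ?_
  rw [Finset.sum_ite_eq (Finset.range (2 * n + 1)) (i + j) (fun k => x ^ k * (A i * B j)),
    if_pos (by simp only [Finset.mem_range] at hi hj ⊢; omega), add_comm i j, pow_add]
  simp only [mul_assoc]

/-- Any right-sided simple quaternionic polynomial equation `∑_{m=0}^{n} xᵐ·(q m) = 0`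
with `n ≥ 1` and `q n ≠ 0` has a root in the quaternions. -/
theorem right_sided_simple_quaternionic_polynomial_has_root
    (n : ℕ) (hn : 1 ≤ n) (q : ℕ → Quaternion ℝ) (hq : q n ≠ 0) :
    ∃ x : Quaternion ℝ, ∑ m ∈ Finset.range (n + 1), x ^ m * q m = 0 := by
  -- truncate q
  set Q : ℕ → Quaternion ℝ := fun k => if k ≤ n then q k else 0 with hQ
  have hQn : Q n = q n := by simp [hQ]
  have hQtop : ∀ k, n < k → Q k = 0 := fun k hk => by simp [hQ, Nat.not_le.mpr hk]
  -- it suffices to find a root of ∑ x^m * Q m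
  suffices h : ∃ x : Quaternion ℝ, ∑ m ∈ Finset.range (n + 1), x ^ m * Q m = 0 by
    obtain ⟨x, hx⟩ := h
    refine ⟨x, ?_⟩
    rw [← hx]
    refine Finset.sum_congr rfl fun m hm => ?_
    rw [hQ]
    simp [Nat.lt_succ_iff.mp (Finset.mem_range.mp hm)]
  -- the real "norm" polynomial coefficients
  set W : ℕ → Quaternion ℝ := fun k => ∑ i ∈ Finset.range (n + 1), ∑ j ∈ Finset.range (n + 1),
    if i + j = k then star (Q i) * Q j else 0 with hW
  have hWreal : ∀ k, W k = (((W k).re : ℝ) : Quaternion ℝ) := by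
    intro k
    have hs : star (W k) = W k := by
      simp only [hW, star_sum, apply_ite (star : ℍ → ℍ), star_mul, star_star, star_zero]
      rw [Finset.sum_comm]
      exact Finset.sum_congr rfl fun i _ => Finset.sum_congr rfl fun j _ => by
        rw [add_comm j i]
    have := Quaternion.star_eq_self.mp hs
    exact this
  -- leading coefficient
  have hW2n : W (2 * n) = ((Quaternion.normSq (q n) : ℝ) : Quaternion ℝ) := by
    simp only [hW]
    rw [Finset.sum_eq_single n]
    · rw [Finset.sum_eq_single n]
      · rw [if_pos (by ring), hQn, Quaternion.star_mul_self]
      · intro j hj hjn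
        exact if_neg (by simp only [Finset.mem_range] at hj; omega)
      · intro h; exact absurd (Finset.self_mem_range_succ n) h
    · intro i hi hin
      apply Finset.sum_eq_zero
      intro j hj
      exact if_neg (by simp only [Finset.mem_range] at hi hj; omega)
    · intro h; exact absurd (Finset.self_mem_range_succ n) h
  -- the complex polynomial with these (real) coefficients has a root z
  set P : Polynomial ℂ := ∑ k ∈ Finset.range (2 * n + 1),
    Polynomial.C (((W k).re : ℂ)) * Polynomial.X ^ k with hP
  have hPcoeff : P.coeff (2 * n) = ((W (2 * n)).re : ℂ) := by
    simp only [hP, Polynomial.finset_sum_coeff, Polynomial.coeff_C_mul, Polynomial.coeff_X_pow]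
    rw [Finset.sum_eq_single (2 * n)]
    · simp
    · intro k hk hkn
      simp [Ne.symm hkn]
    · intro h; exact absurd (Finset.self_mem_range_succ (2 * n)) h
  have hPdeg : 0 < P.degree := by
    have hc : P.coeff (2 * n) ≠ 0 := by
      rw [hPcoeff, hW2n]
      simp only [Quaternion.re_coe]
      exact_mod_cast (Quaternion.normSq_ne_zero.mpr hq)
    calc (0 : WithBot ℕ) < ((2 * n : ℕ) : WithBot ℕ) := by
          exact_mod_cast (by omega : 0 < 2 * n)
      _ ≤ P.degree := Polynomial.le_degree_of_ne_zero hc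
  obtain ⟨z, hz⟩ := Complex.exists_root hPdeg
  have hz' : ∑ k ∈ Finset.range (2 * n + 1), ((W k).re : ℂ) * z ^ k = 0 := by
    have := hz
    simp only [Polynomial.IsRoot, hP, Polynomial.eval_finset_sum, Polynomial.eval_mul,
      Polynomial.eval_C, Polynomial.eval_pow, Polynomial.eval_X] at this
    exact this
  have hzbar : ∑ k ∈ Finset.range (2 * n + 1), ((W k).re : ℂ) * (starRingEnd ℂ z) ^ k = 0 := by
    have := congrArg (starRingEnd ℂ) hz'
    simpa only [map_sum, map_mul, map_pow, Complex.conj_ofReal, map_zero] using this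
  -- the two candidate quaternion points
  set t : ℝ := 2 * z.re with ht
  set s : ℝ := Complex.normSq z with hs
  have hczz : ∀ w : ℂ, w = z ∨ w = starRingEnd ℂ z → w * w - (t : ℂ) * w + (s : ℂ) = 0 := by
    intro w hw
    rcases hw with rfl | rfl <;>
    · apply Complex.ext <;>
        simp [ht, hs, Complex.normSq_apply, Complex.mul_re, Complex.mul_im,
          Complex.ofReal_mul] <;> ring
  set x₀ : Quaternion ℝ := cq z with hx₀
  set x₁ : Quaternion ℝ := cq (starRingEnd ℂ z) with hx₁
  have key : ∀ w : ℂ, w * w - (t : ℂ) * w + (s : ℂ) = 0 →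
      cq w * cq w - t • cq w + s • (1 : Quaternion ℝ) = 0 := by
    intro w hw
    have e1 : t • cq w = cq ((t : ℂ) * w) := by
      rw [map_mul, cq_ofReal, Quaternion.coe_mul_eq_smul]
    have e2 : s • (1 : Quaternion ℝ) = cq ((s : ℂ)) := by
      rw [cq_ofReal, ← Quaternion.coe_mul_eq_smul, mul_one]
    rw [e1, e2, ← map_mul, ← map_sub, ← map_add, hw, map_zero]
  have hclass : ∀ x : Quaternion ℝ, x = x₀ ∨ x = x₁ → x * x - t • x + s • 1 = 0 := by
    rintro x (rfl | rfl)
    · exact key z (hczz z (Or.inl rfl))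
    · exact key _ (hczz _ (Or.inr rfl))
  -- evaluation of the real polynomial at the quaternion points
  have hg : ∀ w : ℂ, (∑ k ∈ Finset.range (2 * n + 1), ((W k).re : ℂ) * w ^ k = 0) →
      ∑ k ∈ Finset.range (2 * n + 1), (cq w) ^ k * W k = 0 := by
    intro w hw
    have : ∑ k ∈ Finset.range (2 * n + 1), (cq w) ^ k * W k
        = cq (∑ k ∈ Finset.range (2 * n + 1), ((W k).re : ℂ) * w ^ k) := by
      rw [map_sum]
      refine Finset.sum_congr rfl fun k _ => ?_
      rw [map_mul, map_pow, cq_ofReal]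
      rw [hWreal k]
      exact (Quaternion.coe_commutes _ _).symm
    rw [this, hw, map_zero]
  have hgx₀ : ∑ k ∈ Finset.range (2 * n + 1), x₀ ^ k * W k = 0 := hg z hz'
  have hgx₁ : ∑ k ∈ Finset.range (2 * n + 1), x₁ ^ k * W k = 0 := hg _ hzbar
  -- if the conjugate polynomial does not vanish at x, we get a root directly
  have main : ∀ x : Quaternion ℝ, (∑ k ∈ Finset.range (2 * n + 1), x ^ k * W k = 0) →
      (∑ i ∈ Finset.range (n + 1), x ^ i * star (Q i)) ≠ 0 →
      ∃ y : Quaternion ℝ, ∑ m ∈ Finset.range (n + 1), y ^ m * Q m = 0 := by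
    intro x hx hU
    set u := ∑ i ∈ Finset.range (n + 1), x ^ i * star (Q i) with hu
    refine ⟨u⁻¹ * x * u, ?_⟩
    have h2 : ∀ j, x ^ j * (u * Q j) = u * ((u⁻¹ * x * u) ^ j * Q j) := by
      intro j
      rw [conj_pow₀ u x hU j]
      simp [mul_assoc, mul_inv_cancel_left₀ hU]
    have h3 : u * ∑ m ∈ Finset.range (n + 1), (u⁻¹ * x * u) ^ m * Q m = 0 := by
      calc u * ∑ m ∈ Finset.range (n + 1), (u⁻¹ * x * u) ^ m * Q m
          = ∑ j ∈ Finset.range (n + 1), u * ((u⁻¹ * x * u) ^ j * Q j) := Finset.mul_sum _ _ _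
        _ = ∑ j ∈ Finset.range (n + 1), x ^ j * (u * Q j) :=
            Finset.sum_congr rfl fun j _ => (h2 j).symm
        _ = ∑ k ∈ Finset.range (2 * n + 1), x ^ k * W k := by
            simp only [hW]
            exact (prod_eval n (fun i => star (Q i)) Q x).symm
        _ = 0 := hx
    exact (mul_eq_zero.mp h3).resolve_left hU
  rcases ne_or_eq (∑ i ∈ Finset.range (n + 1), x₀ ^ i * star (Q i)) 0 with hU0 | hU0
  · exact main x₀ hgx₀ hU0
  rcases ne_or_eq (∑ i ∈ Finset.range (n + 1), x₁ ^ i * star (Q i)) 0 with hU1 | hU1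
  · exact main x₁ hgx₁ hU1
  by_cases him : z.im = 0
  · -- z is real; then x₀ is a real scalar and conjugating hU0 gives a root
    have hx₀r : x₀ = ((z.re : ℝ) : Quaternion ℝ) := by
      rw [hx₀]; ext <;> simp [cq, him] <;> first | rfl | exact him
    refine ⟨x₀, ?_⟩
    have : (0 : Quaternion ℝ) = ∑ i ∈ Finset.range (n + 1), x₀ ^ i * Q i := by
      calc (0 : Quaternion ℝ) = star (∑ i ∈ Finset.range (n + 1), x₀ ^ i * star (Q i)) := by
            rw [hU0, star_zero]
        _ = ∑ i ∈ Finset.range (n + 1), x₀ ^ i * Q i := by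
            rw [star_sum]
            refine Finset.sum_congr rfl fun i _ => ?_
            rw [star_mul, star_star, hx₀r, ← Quaternion.coe_pow, Quaternion.star_coe,
              ← Quaternion.coe_commutes, Quaternion.coe_pow]
    exact this.symm
  · -- z is not real : use the division argument
    obtain ⟨b, r₀, r₁, hb, h0, h1, h2⟩ := div_lemma t s n (fun k => star (Q k))
      (fun k hk => by show star (Q k) = 0; rw [hQtop k hk, star_zero])
    obtain ⟨m, hm⟩ : ∃ m, n = m + 1 := ⟨n - 1, by omega⟩
    have hbm : b m = 0 := hb m (by omega)
    have hbm1 : b (m + 1) = 0 := hb (m + 1) (by omega)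
    have hev : ∀ (a' b' : ℕ → Quaternion ℝ) (r₀' r₁' : Quaternion ℝ),
        a' 0 = r₀' + s • b' 0 → a' 1 = r₁' - t • b' 0 + s • b' 1 →
        (∀ k, a' (k + 2) = b' k - t • b' (k + 1) + s • b' (k + 2)) →
        b' m = 0 → b' (m + 1) = 0 →
        ∀ x : Quaternion ℝ, x * x - t • x + s • 1 = 0 →
        ∑ k ∈ Finset.range (n + 1), x ^ k * a' k = x * r₁' + r₀' := by
      intro a' b' r₀' r₁' e0 e1 e2 em em1 x hx
      have hEV := ev_aux t s x a' b' r₀' r₁' e0 e1 e2 m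
      rw [hm, show m + 1 + 1 = m + 2 from rfl, hEV, hx]
      simp [em, em1]
    have hr₀ : x₀ * r₁ + r₀ = 0 := by
      rw [← hev (fun k => star (Q k)) b r₀ r₁ h0 h1 h2 hbm hbm1 x₀ (hclass x₀ (Or.inl rfl))]
      exact hU0
    have hr₁' : x₁ * r₁ + r₀ = 0 := by
      rw [← hev (fun k => star (Q k)) b r₀ r₁ h0 h1 h2 hbm hbm1 x₁ (hclass x₁ (Or.inr rfl))]
      exact hU1
    have hx01 : x₀ ≠ x₁ := by
      intro he
      have h1' : x₀.imI = x₁.imI := by rw [he]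
      rw [hx₀, hx₁] at h1'
      have h2' : z.im = ((starRingEnd ℂ) z).im := h1'
      rw [Complex.conj_im] at h2'
      exact him (by linarith)
    have hr1 : r₁ = 0 := by
      have e : x₀ * r₁ = -r₀ := eq_neg_of_add_eq_zero_left hr₀
      have e' : x₁ * r₁ = -r₀ := eq_neg_of_add_eq_zero_left hr₁'
      have hsub : (x₀ - x₁) * r₁ = 0 := by rw [sub_mul, e, e', sub_self]
      rcases mul_eq_zero.mp hsub with h | h
      · exact absurd (sub_eq_zero.mp h) hx01
      · exact h
    have hr0 : r₀ = 0 := by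
      have := hr₀
      rw [hr1, mul_zero, zero_add] at this
      exact this
    have e0 : Q 0 = 0 + s • star (b 0) := by
      have := congrArg star h0
      simpa [star_add, Quaternion.star_smul, star_star, hr0] using this
    have e1 : Q 1 = 0 - t • star (b 0) + s • star (b 1) := by
      have := congrArg star h1
      simpa [star_add, star_sub, Quaternion.star_smul, star_star, hr1] using this
    have e2 : ∀ k, Q (k + 2) = star (b k) - t • star (b (k + 1)) + s • star (b (k + 2)) := by
      intro k
      have := congrArg star (h2 k)
      simpa [star_add, star_sub, Quaternion.star_smul, star_star] using this
    have final := hev Q (fun k => star (b k)) 0 0 e0 e1 e2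
      (by show star (b m) = 0; rw [hbm, star_zero]) (by show star (b (m+1)) = 0; rw [hbm1, star_zero]) x₀ (hclass x₀ (Or.inl rfl))
    exact ⟨x₀, by rw [final]; simp⟩
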